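/- arXiv:2007.00057 — 2 statements merged into one kernel-verified Lean document; each statement's English description precedes it below -/
import Mathlib

section
/- A graph G with at least one vertex is (P_3 + P_1)-free if and only if G can be written as a join G = H_1 ∨ H_2 ∨ ⋯ ∨ H_n where for each i, either the independence number of H_i is at most 2 or H_i is a disjoint union of cliques. -/
open SimpleGraph

/-- `G` is `k`-vertex-critical: `χ(G) = k` and deleting any vertex decreases `χ`. -/
def IsKVertexCritical {V : Type*} (G : SimpleGraph V) (k : ℕ) : Prop :=
  G.chromaticNumber = k ∧ ∀ v : V, (G.induce ({v}ᶜ : Set V)).chromaticNumber < k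

/-- `G` has no induced subgraph isomorphic to `H`. -/
def InducedFree {V W : Type*} (G : SimpleGraph V) (H : SimpleGraph W) : Prop :=
  ∀ s : Set V, IsEmpty (G.induce s ≃g H)

/-- `s` is an independent set of `G`. -/
def IsIndepSet {V : Type*} (G : SimpleGraph V) (s : Set V) : Prop :=
  s.Pairwise fun a b => ¬ G.Adj a b

/-- The graph `P_2 + ℓ P_1`: an edge together with `ℓ` isolated vertices. -/
def P2lP1 (ℓ : ℕ) : SimpleGraph (Fin (ℓ + 2)) := fromEdgeSet {s(0, 1)}

/-- The graph `P_3 + P_1`: a path on three vertices plus an isolated vertex. -/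
def P3P1 : SimpleGraph (Fin 4) := fromEdgeSet {s(0, 1), s(1, 2)}

/-- The paw: a triangle with a pendant vertex. -/
def paw : SimpleGraph (Fin 4) := fromEdgeSet {s(0, 1), s(0, 2), s(1, 2), s(2, 3)}

/-- The join of two graphs: all edges between the two sides are added. -/
def joinG {α β : Type*} (G : SimpleGraph α) (H : SimpleGraph β) : SimpleGraph (α ⊕ β) where
  Adj x y :=
    match x, y with
    | Sum.inl a, Sum.inl b => G.Adj a b
    | Sum.inr a, Sum.inr b => H.Adj a b
    | Sum.inl _, Sum.inr _ => True
    | Sum.inr _, Sum.inl _ => True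
  symm := ⟨by
    rintro (a | a) (b | b) h
    · exact G.adj_symm h
    · trivial
    · trivial
    · exact H.adj_symm h⟩
  loopless := ⟨by
    rintro (a | a) h
    · exact G.irrefl h
    · exact H.irrefl h⟩

lemma p01 : P3P1.Adj 0 1 := by
  rw [P3P1, fromEdgeSet_adj]
  exact ⟨Set.mem_insert _ _, by decide⟩

lemma p12 : P3P1.Adj 1 2 := by
  rw [P3P1, fromEdgeSet_adj]
  exact ⟨by right; rfl, by decide⟩

lemma pn02 : ¬ P3P1.Adj 0 2 := by
  rw [P3P1, fromEdgeSet_adj]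
  rintro ⟨hm, -⟩
  simp [Sym2.eq_iff] at hm

lemma pn30 : ¬ P3P1.Adj 3 0 := by
  rw [P3P1, fromEdgeSet_adj]
  rintro ⟨hm, -⟩
  simp [Sym2.eq_iff] at hm

lemma pn31 : ¬ P3P1.Adj 3 1 := by
  rw [P3P1, fromEdgeSet_adj]
  rintro ⟨hm, -⟩
  simp [Sym2.eq_iff] at hm

lemma pn32 : ¬ P3P1.Adj 3 2 := by
  rw [P3P1, fromEdgeSet_adj]
  rintro ⟨hm, -⟩
  simp [Sym2.eq_iff] at hm

lemma free4 {V : Type} {G : SimpleGraph V} (h : InducedFree G P3P1)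
    {x y z w : V} (hxy : G.Adj x y) (hyz : G.Adj y z) (hxz : ¬ G.Adj x z)
    (hwx : ¬ G.Adj w x) (hwy : ¬ G.Adj w y) (hwz : ¬ G.Adj w z)
    (hwxne : w ≠ x) (hwyne : w ≠ y) (hwzne : w ≠ z) (hxzne : x ≠ z) : False := by
  have hxyne := hxy.ne
  have hyzne := hyz.ne
  set s : Set V := {x, y, z, w} with hs
  have mx : x ∈ s := by simp [hs]
  have my : y ∈ s := by simp [hs]
  have mz : z ∈ s := by simp [hs]
  have mw : w ∈ s := by simp [hs]
  let g : Fin 4 → s := ![⟨x, mx⟩, ⟨y, my⟩, ⟨z, mz⟩, ⟨w, mw⟩]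
  have hval : ∀ i, (g i : V) = ![x, y, z, w] i := by
    intro i; fin_cases i <;> rfl
  have hinj : Function.Injective g := by
    intro i j hij
    have : (![x, y, z, w] i) = (![x, y, z, w] j) := by
      rw [← hval, ← hval, hij]
    fin_cases i <;> fin_cases j <;> first | rfl | (exfalso; simp_all)
  have hsurj : Function.Surjective g := by
    rintro ⟨v, hv⟩
    rcases hv with rfl | rfl | rfl | rfl
    · exact ⟨0, rfl⟩
    · exact ⟨1, rfl⟩
    · exact ⟨2, rfl⟩
    · exact ⟨3, rfl⟩
  have iso : P3P1 ≃g G.induce s := by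
    refine ⟨Equiv.ofBijective g ⟨hinj, hsurj⟩, ?_⟩
    intro a b
    show (G.induce s).Adj (g a) (g b) ↔ P3P1.Adj a b
    have hind : ∀ i j : Fin 4, (G.induce s).Adj (g i) (g j) ↔ G.Adj (g i : V) (g j : V) := by
      intro i j; simp [comap_adj]
    rw [hind, hval, hval]
    fin_cases a <;> fin_cases b <;>
      simp [p01, p12, pn02, pn30, pn31, pn32, P3P1] <;>
      first
        | exact hxy | exact hyz | exact hxy.symm | exact hyz.symm
        | exact G.irrefl
        | (intro hc; first
            | exact hxz hc | exact hwx hc | exact hwy hc | exact hwz hc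
            | exact hxz hc.symm | exact hwx hc.symm | exact hwy hc.symm | exact hwz hc.symm)
  exact (h s).false iso.symm

/-- If `t` is adjacent (in `Gᶜ`) to a vertex of a `Gᶜ`-triangle and nonadjacent to the
other two (and distinct from them), we get a contradiction. -/
lemma claimB {V : Type} {G : SimpleGraph V} (h : InducedFree G P3P1)
    {a b c t : V} (hab : Gᶜ.Adj a b) (hac : Gᶜ.Adj a c) (hbc : Gᶜ.Adj b c)
    (hta : Gᶜ.Adj t a) (htb : ¬ Gᶜ.Adj t b) (htc : ¬ Gᶜ.Adj t c) : False := by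
  have htbne : t ≠ b := by rintro rfl; exact htc hbc
  have htcne : t ≠ c := by rintro rfl; exact htb hbc.symm
  rw [compl_adj] at hab hac hbc hta
  have gtb : G.Adj t b := by
    by_contra hg; exact htb ((compl_adj G t b).2 ⟨htbne, hg⟩)
  have gtc : G.Adj t c := by
    by_contra hg; exact htc ((compl_adj G t c).2 ⟨htcne, hg⟩)
  -- In G: path b - t - c, with a isolated from all three.
  exact free4 h gtb.symm gtc hbc.2 hab.2 (fun hg => hta.2 hg.symm) hac.2
    hab.1 hta.1.symm hac.1 (fun e => hbc.1 e)

/-- If `t` is `Gᶜ`-adjacent to `a` in a `Gᶜ`-triangle `a b c` and `t ∉ {b, c}`, then `t`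
is adjacent to at least two triangle vertices. -/
lemma two_of {V : Type} {G : SimpleGraph V} (h : InducedFree G P3P1)
    {a b c t : V} (hab : Gᶜ.Adj a b) (hac : Gᶜ.Adj a c) (hbc : Gᶜ.Adj b c)
    (hta : Gᶜ.Adj t a) : Gᶜ.Adj t b ∨ Gᶜ.Adj t c := by
  by_cases htb : Gᶜ.Adj t b
  · exact Or.inl htb
  by_cases htc : Gᶜ.Adj t c
  · exact Or.inr htc
  exact absurd (claimB h hab hac hbc hta htb htc) not_false

/-- Lemma A: every vertex reachable (in `Gᶜ`) from a `Gᶜ`-triangle is either in the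
triangle or adjacent to at least two of its vertices. -/
lemma lemA {V : Type} {G : SimpleGraph V} (h : InducedFree G P3P1)
    {a b c : V} (hab : Gᶜ.Adj a b) (hac : Gᶜ.Adj a c) (hbc : Gᶜ.Adj b c)
    {t : V} (hr : Gᶜ.Reachable t a) :
    (t = a ∨ t = b ∨ t = c) ∨
      ((Gᶜ.Adj t a ∧ Gᶜ.Adj t b) ∨ (Gᶜ.Adj t a ∧ Gᶜ.Adj t c) ∨
        (Gᶜ.Adj t b ∧ Gᶜ.Adj t c)) := by
  obtain ⟨wk⟩ := hr
  induction wk with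
  | nil => exact Or.inl (Or.inl rfl)
  | @cons t s a hts wk ih =>
    -- hts : Gᶜ.Adj t s, ih : property for s
    -- helper: if t is Gᶜ-adjacent to one vertex of the triangle a b c, conclude.
    have onehit : ∀ {u : V}, Gᶜ.Adj t u → (u = a ∨ u = b ∨ u = c) →
        (t = a ∨ t = b ∨ t = c) ∨
          ((Gᶜ.Adj t a ∧ Gᶜ.Adj t b) ∨ (Gᶜ.Adj t a ∧ Gᶜ.Adj t c) ∨
            (Gᶜ.Adj t b ∧ Gᶜ.Adj t c)) := by
      rintro u htu (rfl | rfl | rfl)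
      · rcases two_of h hab hac hbc htu with htb | htc
        · exact Or.inr (Or.inl ⟨htu, htb⟩)
        · exact Or.inr (Or.inr (Or.inl ⟨htu, htc⟩))
      · rcases two_of h hab.symm hbc hac htu with hta | htc
        · exact Or.inr (Or.inl ⟨hta, htu⟩)
        · exact Or.inr (Or.inr (Or.inr ⟨htu, htc⟩))
      · rcases two_of h hac.symm hbc.symm hab htu with hta | htb
        · exact Or.inr (Or.inr (Or.inl ⟨hta, htu⟩))
        · exact Or.inr (Or.inr (Or.inr ⟨htb, htu⟩))
    rcases ih hab hac with (rfl | rfl | rfl) | htwo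
    · exact onehit hts (Or.inl rfl)
    · exact onehit hts (Or.inr (Or.inl rfl))
    · exact onehit hts (Or.inr (Or.inr rfl))
    · -- s is adjacent to two triangle vertices, forming a triangle with them
      have key : ∀ {p q : V}, Gᶜ.Adj s p → Gᶜ.Adj s q → Gᶜ.Adj p q →
          (p = a ∨ p = b ∨ p = c) → (q = a ∨ q = b ∨ q = c) →
          (t = a ∨ t = b ∨ t = c) ∨
            ((Gᶜ.Adj t a ∧ Gᶜ.Adj t b) ∨ (Gᶜ.Adj t a ∧ Gᶜ.Adj t c) ∨
              (Gᶜ.Adj t b ∧ Gᶜ.Adj t c)) := by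
        intro p q hsp hsq hpq hpm hqm
        by_cases htp : t = p
        · exact Or.inl (htp ▸ hpm)
        by_cases htq : t = q
        · exact Or.inl (htq ▸ hqm)
        -- t adjacent to s in triangle s p q; so t adjacent to p or q
        rcases two_of h hsp hsq hpq hts with htp' | htq'
        · exact onehit htp' hpm
        · exact onehit htq' hqm
      rcases htwo with ⟨hsa, hsb⟩ | ⟨hsa, hsc⟩ | ⟨hsb, hsc⟩
      · exact key hsa hsb hab (Or.inl rfl) (Or.inr (Or.inl rfl))
      · exact key hsa hsc hac (Or.inl rfl) (Or.inr (Or.inr rfl))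
      · exact key hsb hsc hbc (Or.inr (Or.inl rfl)) (Or.inr (Or.inr rfl))

theorem P3P1_free_iff_join_decomposition {V : Type} [Fintype V] [Nonempty V]
    (G : SimpleGraph V) :
    InducedFree G P3P1 ↔
      ∃ (n : ℕ) (f : V → Fin n), Function.Surjective f ∧
        (∀ x y : V, f x ≠ f y → G.Adj x y) ∧
        ∀ i : Fin n,
          (∀ s : Set V, s ⊆ f ⁻¹' {i} → _root_.IsIndepSet G s → s.ncard ≤ 2) ∨
          (∀ x y z : V, f x = i → f y = i → f z = i →
            G.Adj x y → G.Adj y z → x ≠ z → G.Adj x z) := by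
  classical
  constructor
  · intro hfree
    obtain ⟨n, ⟨e⟩⟩ := Finite.exists_equiv_fin Gᶜ.ConnectedComponent
    refine ⟨n, fun v => e (Gᶜ.connectedComponentMk v), ?_, ?_, ?_⟩
    · intro i
      obtain ⟨v, hv⟩ := (e.symm i).exists_rep
      refine ⟨v, ?_⟩
      have h2 := congrArg e hv
      rw [Equiv.apply_symm_apply] at h2
      exact h2
    · intro x y hne
      by_contra hnadj
      rcases eq_or_ne x y with rfl | hxyne
      · exact hne rfl
      exact hne (congrArg e (ConnectedComponent.sound
        (((compl_adj G x y).2 ⟨hxyne, hnadj⟩).reachable)))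
    · intro i
      by_cases hcl : ∀ x y z : V, e (Gᶜ.connectedComponentMk x) = i →
          e (Gᶜ.connectedComponentMk y) = i → e (Gᶜ.connectedComponentMk z) = i →
          G.Adj x y → G.Adj y z → x ≠ z → G.Adj x z
      · exact Or.inr hcl
      left
      intro s hs hind
      by_contra hcard
      push_neg at hcard
      -- extract an independent triple a b c in the fiber
      obtain ⟨t, hts, htcard⟩ := Set.exists_subset_card_eq (s := s) (n := 3) (by omega)
      obtain ⟨a, b, c, hab', hac', hbc', rfl⟩ := Set.ncard_eq_three.1 htcard
      push_neg at hcl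
      obtain ⟨x, y, z, hfx, hfy, hfz, hxy, hyz, hxzne, hxz⟩ := hcl
      -- the triple a b c forms a triangle in the complement
      have has : a ∈ s := hts (by simp)
      have hbs : b ∈ s := hts (by simp)
      have hcs : c ∈ s := hts (by simp)
      have cab : Gᶜ.Adj a b := (compl_adj G a b).2 ⟨hab', hind has hbs hab'⟩
      have cac : Gᶜ.Adj a c := (compl_adj G a c).2 ⟨hac', hind has hcs hac'⟩
      have cbc : Gᶜ.Adj b c := (compl_adj G b c).2 ⟨hbc', hind hbs hcs hbc'⟩
      have reach : ∀ u v : V, e (Gᶜ.connectedComponentMk u) = e (Gᶜ.connectedComponentMk v) →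
          Gᶜ.Reachable u v := fun u v huv => (ConnectedComponent.eq).1 (e.injective huv)
      have hfa : e (Gᶜ.connectedComponentMk a) = i := hs has
      have hyx : ¬ Gᶜ.Adj y x := fun hc => ((compl_adj G y x).1 hc).2 hxy.symm
      have hyzc : ¬ Gᶜ.Adj y z := fun hc => ((compl_adj G y z).1 hc).2 hyz
      -- Step 1: a complement-triangle containing y
      obtain ⟨p, q, hyp, hyq, hpq⟩ :
          ∃ p q, Gᶜ.Adj y p ∧ Gᶜ.Adj y q ∧ Gᶜ.Adj p q := by
        rcases lemA hfree cab cac cbc (reach y a (by rw [hfy, hfa])) with (rfl | rfl | rfl) | hh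
        · exact ⟨b, c, cab, cac, cbc⟩
        · exact ⟨a, c, cab.symm, cbc, cac⟩
        · exact ⟨a, b, cac.symm, cbc.symm, cab⟩
        · rcases hh with ⟨h1, h2⟩ | ⟨h1, h2⟩ | ⟨h1, h2⟩
          · exact ⟨a, b, h1, h2, cab⟩
          · exact ⟨a, c, h1, h2, cac⟩
          · exact ⟨b, c, h1, h2, cbc⟩
      -- Step 2: x and z are complement-adjacent to both p and q
      have hx2 : Gᶜ.Adj x p ∧ Gᶜ.Adj x q := by
        rcases lemA hfree hyp hyq hpq (reach x y (by rw [hfx, hfy])) with (rfl | rfl | rfl) | hh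
        · exact (G.irrefl hxy).elim
        · exact (hyx hyp).elim
        · exact (hyx hyq).elim
        · rcases hh with ⟨h1, h2⟩ | ⟨h1, h2⟩ | ⟨h1, h2⟩
          · exact (hyx h1.symm).elim
          · exact (hyx h1.symm).elim
          · exact ⟨h1, h2⟩
      have hz2 : Gᶜ.Adj z p ∧ Gᶜ.Adj z q := by
        rcases lemA hfree hyp hyq hpq (reach z y (by rw [hfz, hfy])) with (rfl | rfl | rfl) | hh
        · exact (G.irrefl hyz).elim
        · exact (hyzc hyp).elim
        · exact (hyzc hyq).elim
        · rcases hh with ⟨h1, h2⟩ | ⟨h1, h2⟩ | ⟨h1, h2⟩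
          · exact (hyzc h1.symm).elim
          · exact (hyzc h1.symm).elim
          · exact ⟨h1, h2⟩
      -- Step 3: x - y - z is a path in G and p is isolated from it: P3 + P1
      exact free4 hfree hxy hyz hxz
        (fun hc => ((compl_adj G x p).1 hx2.1).2 hc.symm)
        (fun hc => ((compl_adj G y p).1 hyp).2 hc.symm)
        (fun hc => ((compl_adj G z p).1 hz2.1).2 hc.symm)
        hx2.1.ne' hyp.ne' hz2.1.ne' hxzne
  · rintro ⟨n, f, -, hadj, hcond⟩ s
    constructor
    rintro φ
    set ψ := φ.symm with hψ
    set x : V := (ψ 0 : V) with hx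
    set y : V := (ψ 1 : V) with hy
    set z : V := (ψ 2 : V) with hz
    set w : V := (ψ 3 : V) with hw
    have hne : ∀ i j : Fin 4, i ≠ j → (ψ i : V) ≠ (ψ j : V) := by
      intro i j hij hc
      exact hij (ψ.injective (Subtype.coe_injective hc))
    have hmap : ∀ i j : Fin 4, G.Adj (ψ i : V) (ψ j : V) ↔ P3P1.Adj i j := by
      intro i j
      rw [← ψ.map_rel_iff]
      simp [comap_adj]
    have hxy : G.Adj x y := (hmap 0 1).2 p01
    have hyz : G.Adj y z := (hmap 1 2).2 p12
    have hxz : ¬ G.Adj x z := fun hc => pn02 ((hmap 0 2).1 hc)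
    have hwx : ¬ G.Adj w x := fun hc => pn30 ((hmap 3 0).1 hc)
    have hwy : ¬ G.Adj w y := fun hc => pn31 ((hmap 3 1).1 hc)
    have hwz : ¬ G.Adj w z := fun hc => pn32 ((hmap 3 2).1 hc)
    -- all four lie in one fiber
    have hfwx : f w = f x := by by_contra hc; exact hwx (hadj w x hc)
    have hfwy : f w = f y := by by_contra hc; exact hwy (hadj w y hc)
    have hfwz : f w = f z := by by_contra hc; exact hwz (hadj w z hc)
    rcases hcond (f w) with hα | hβ
    · -- {x, z, w} is an independent 3-set in the fiber
      have h3 : ({x, z, w} : Set V).ncard = 3 := by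
        rw [Set.ncard_insert_of_notMem (by
          simp only [Set.mem_insert_iff, Set.mem_singleton_iff]
          push_neg
          exact ⟨hne 0 2 (by decide), (hne 3 0 (by decide)).symm⟩)]
        rw [Set.ncard_insert_of_notMem (by
          simp only [Set.mem_singleton_iff]
          exact (hne 3 2 (by decide)).symm)]
        simp
      have := hα {x, z, w} (by
        rintro v (rfl | rfl | rfl)
        · exact hfwx.symm
        · exact hfwz.symm
        · rfl)
        (by
          intro a ha b hb hab
          rcases ha with rfl | rfl | rfl <;> rcases hb with rfl | rfl | rfl <;>
            first
              | exact absurd rfl hab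
              | exact hxz
              | exact fun hc => hxz hc.symm
              | exact hwx
              | exact fun hc => hwx hc.symm
              | exact hwz
              | exact fun hc => hwz hc.symm)
      omega
    · exact hxz (hβ x y z hfwx.symm hfwy.symm hfwz.symm hxy hyz (hne 0 2 (by decide)))
end

section
/- Let ℓ ≥ 1 and k ≥ 2, and suppose every (k−1)-vertex-critical (P_2 + ℓP_1)-free graph has at most f vertices. Then every k-vertex-critical (P_2 + ℓP_1)-free graph G with a maximum independent set S of size at least ℓ+1 satisfies |S| ≤ (ℓ−1)·f. -/
open SimpleGraph

section Aux
variable {V : Type*} {G : SimpleGraph V}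

lemma induce_colorable_mono {s t : Set V} (hst : s ⊆ t) {n : ℕ}
    (h : (G.induce t).Colorable n) : (G.induce s).Colorable n := by
  obtain ⟨C⟩ := h
  exact ⟨C.comp ⟨fun a => ⟨a.1, hst a.2⟩, fun h => h⟩⟩

lemma inducedFree_induce {W : Type*} {H : SimpleGraph W} (h : InducedFree G H) (t : Set V) :
    InducedFree (G.induce t) H := by
  intro s
  constructor
  intro e
  have iso : (G.induce t).induce s ≃g G.induce (Subtype.val '' s) := by
    refine ⟨Equiv.Set.image Subtype.val s Subtype.val_injective, ?_⟩
    rintro a b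
    simp [Equiv.Set.image, Equiv.Set.imageOfInjOn]
  exact (h (Subtype.val '' s)).false (iso.symm.trans e)

lemma not_inducedFree_of_map {W : Type*} (H : SimpleGraph W)
    (v : W → V) (hinj : Function.Injective v)
    (hadj : ∀ i j, G.Adj (v i) (v j) ↔ H.Adj i j) : ¬ InducedFree G H := by
  intro h
  refine (h (Set.range v)).false ?_
  refine ⟨(Equiv.ofInjective v hinj).symm, ?_⟩
  intro a b
  rw [← hadj, Equiv.apply_ofInjective_symm hinj, Equiv.apply_ofInjective_symm hinj]
  exact Iff.rfl

lemma P2lP1_adj {ℓ : ℕ} (i j : Fin (ℓ+2)) :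
    (P2lP1 ℓ).Adj i j ↔ (i = 0 ∧ j = 1) ∨ (i = 1 ∧ j = 0) := by
  rw [P2lP1, fromEdgeSet_adj, Set.mem_singleton_iff, Sym2.eq_iff]
  constructor
  · rintro ⟨h, -⟩; exact h
  · intro h
    refine ⟨h, ?_⟩
    rcases h with ⟨rfl, rfl⟩ | ⟨rfl, rfl⟩
    · exact Fin.zero_ne_one
    · exact Fin.zero_ne_one.symm

lemma enat_le_of_lt_succ {a : ℕ∞} {n : ℕ} (h : a < ((n+1 : ℕ) : ℕ∞)) : a ≤ (n : ℕ∞) := by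
  lift a to ℕ using h.ne_top
  rw [Nat.cast_lt] at h
  exact_mod_cast Nat.lt_succ_iff.mp h

lemma chromaticNumber_eq_of_colorable_not {W : Type*} {H : SimpleGraph W} {n : ℕ}
    (h1 : H.Colorable (n+1)) (h2 : ¬ H.Colorable n) :
    H.chromaticNumber = ((n+1 : ℕ) : ℕ∞) := by
  have ha := h1.chromaticNumber_le
  have hb : ¬ H.chromaticNumber ≤ (n : ℕ∞) := fun h => h2 (chromaticNumber_le_iff_colorable.mp h)
  have hne : H.chromaticNumber ≠ ⊤ := by
    intro h; rw [h, top_le_iff] at ha; exact ENat.coe_ne_top _ ha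
  lift H.chromaticNumber to ℕ using hne with c hc
  rw [Nat.cast_le] at ha
  rw [Nat.cast_le, not_le] at hb
  exact_mod_cast congrArg (Nat.cast : ℕ → ℕ∞) (by omega : c = n + 1)

def vmap {V : Type*} (x w : V) {n : ℕ} (u : Fin n → V) : Fin (n+2) → V
  | ⟨0, _⟩ => x
  | ⟨1, _⟩ => w
  | ⟨i+2, h⟩ => u ⟨i, by omega⟩

end Aux

theorem max_indep_set_bound_P2lP1_free (ℓ k f : ℕ) (hℓ : 1 ≤ ℓ) (hk : 2 ≤ k)
    (hbound : ∀ (W : Type) [Fintype W] (H : SimpleGraph W),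
      IsKVertexCritical H (k - 1) → InducedFree H (P2lP1 ℓ) → Fintype.card W ≤ f)
    {V : Type} [Fintype V] (G : SimpleGraph V)
    (hcrit : IsKVertexCritical G k) (hfree : InducedFree G (P2lP1 ℓ))
    (S : Set V) (hS : _root_.IsIndepSet G S)
    (hmax : ∀ T : Set V, _root_.IsIndepSet G T → T.ncard ≤ S.ncard)
    (hcard : ℓ + 1 ≤ S.ncard) :
    S.ncard ≤ (ℓ - 1) * f := by
  classical
  obtain ⟨m, rfl⟩ : ∃ m, k = m + 2 := ⟨k - 2, by omega⟩
  obtain ⟨l, rfl⟩ : ∃ l, ℓ = l + 1 := ⟨ℓ - 1, by omega⟩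
  show S.ncard ≤ l * f
  -- G is not (m+1)-colorable
  have hnc : ¬ G.Colorable (m+1) := by
    intro h
    have := h.chromaticNumber_le
    rw [hcrit.1] at this
    rw [Nat.cast_le] at this
    omega
  -- deleting the independent set S keeps chromatic number ≥ m+1
  have step1 : ¬ (G.induce (Sᶜ : Set V)).Colorable m := by
    rintro ⟨C⟩
    apply hnc
    have C' : G.Coloring (Option (Fin m)) := by
      refine Coloring.mk
        (fun v => if h : v ∈ S then none else some (C ⟨v, h⟩)) ?_
      intro v w hvw
      by_cases hv : v ∈ S <;> by_cases hw : w ∈ S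
      · exact absurd hvw (hS hv hw (G.ne_of_adj hvw))
      · simp [hv, hw]
      · simp [hv, hw]
      · simp only [dif_neg hv, dif_neg hw, Ne, Option.some_inj]
        exact C.valid hvw
    have := C'.colorable
    simpa using this
  -- choose a minimal subset W of Sᶜ that is not m-colorable
  have hex : ∃ n, ∃ W : Set V, W ⊆ Sᶜ ∧ ¬ (G.induce W).Colorable m ∧ W.ncard = n :=
    ⟨(Sᶜ : Set V).ncard, Sᶜ, le_refl _, step1, rfl⟩
  obtain ⟨W, hWsub, hWnc, hWcard⟩ := Nat.find_spec hex
  have hWmin : ∀ (W' : Set V), W' ⊆ Sᶜ → ¬ (G.induce W').Colorable m →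
      W.ncard ≤ W'.ncard := by
    intro W' h1 h2
    by_contra hlt
    exact Nat.find_min hex (by omega : W'.ncard < Nat.find hex) ⟨W', h1, h2, rfl⟩
  clear hWcard
  -- W is nonempty
  have hWne : W.Nonempty := by
    rcases Set.eq_empty_or_nonempty W with rfl | h
    · exact absurd (by
        haveI : IsEmpty (↥(∅ : Set V)) := by simp [Set.isEmpty_coe_sort]
        exact Colorable.of_isEmpty m) hWnc
    · exact h
  -- removing any vertex of W makes it m-colorable
  have hWdel : ∀ v ∈ W, (G.induce (W \ {v})).Colorable m := by
    intro v hv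
    by_contra h
    have := hWmin _ (fun a ha => hWsub ha.1) h
    have hlt : (W \ {v}).ncard < W.ncard :=
      Set.ncard_diff_singleton_lt_of_mem hv (Set.toFinite W)
    omega
  -- W is (m+1)-colorable
  have hWcol : (G.induce W).Colorable (m+1) := by
    obtain ⟨v, hv⟩ := hWne
    obtain ⟨C⟩ := hWdel v hv
    have C' : (G.induce W).Coloring (Option (Fin m)) := by
      refine Coloring.mk
        (fun w => if h : (w : V) = v then none else
          some (C ⟨w.1, ⟨w.2, h⟩⟩)) ?_
      rintro ⟨a, ha⟩ ⟨b, hb⟩ hab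
      have hne : a ≠ b := fun h => (G.induce W).ne_of_adj hab (Subtype.ext h)
      by_cases h1 : a = v <;> by_cases h2 : b = v
      · exact absurd (h1.trans h2.symm) hne
      · simp [h1, h2]
      · simp [h1, h2]
      · simp only [dif_neg h1, dif_neg h2, Ne, Option.some_inj]
        exact C.valid hab
    have := C'.colorable
    simpa using this
  -- the induced subgraph on W is (m+1)-vertex-critical
  have hWcrit : IsKVertexCritical (G.induce W) (m+1) := by
    constructor
    · exact_mod_cast chromaticNumber_eq_of_colorable_not hWcol hWnc
    · intro v
      have hcm : ((G.induce W).induce ({v}ᶜ : Set ↥W)).Colorable m := by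
        obtain ⟨C⟩ := hWdel v.1 v.2
        refine ⟨Coloring.mk
          (fun a => C ⟨a.1.1, ⟨a.1.2, fun h => a.2 (Subtype.ext h)⟩⟩) ?_⟩
        intro a b hab
        exact C.valid hab
      calc ((G.induce W).induce ({v}ᶜ : Set ↥W)).chromaticNumber
          ≤ (m : ℕ∞) := hcm.chromaticNumber_le
        _ < ((m+1 : ℕ) : ℕ∞) := by exact_mod_cast Nat.lt_succ_self m
  -- the induced subgraph on W is P2lP1-free, hence |W| ≤ f
  have hWf : W.ncard ≤ f := by
    have := hbound ↥W (G.induce W) hWcrit (inducedFree_induce hfree W)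
    rwa [← Nat.card_coe_set_eq, Nat.card_eq_fintype_card]
  -- every non-S vertex has at most l non-neighbors in S
  have claimA : ∀ x ∉ S, {a : V | a ∈ S ∧ ¬ G.Adj x a}.ncard ≤ l := by
    intro x hxS
    by_contra hgt
    push_neg at hgt
    -- x has a neighbor in S
    have hxadj : ∃ w ∈ S, G.Adj x w := by
      by_contra hno
      push_neg at hno
      have hindep : _root_.IsIndepSet G (insert x S) := by
        haveI : Std.Symm (fun a b => ¬ G.Adj a b) :=
          ⟨fun a b (h : ¬ G.Adj a b) (h2 : G.Adj b a) => h h2.symm⟩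
        rw [_root_.IsIndepSet, Set.pairwise_insert_of_symm]
        exact ⟨hS, fun b hb _ => hno b hb⟩
      have := hmax _ hindep
      rw [Set.ncard_insert_of_notMem hxS] at this
      omega
    obtain ⟨w, hwS, hxw⟩ := hxadj
    -- pick l+1 non-neighbors of x in S
    obtain ⟨T, hTsub, hTcard⟩ :=
      Set.exists_subset_card_eq (show l + 1 ≤ {a : V | a ∈ S ∧ ¬ G.Adj x a}.ncard by omega)
    have hTfin : T.toFinset.card = l + 1 := by
      rw [← Set.ncard_eq_toFinset_card']; exact hTcard
    set e := T.toFinset.equivFinOfCardEq hTfin with he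
    set u : Fin (l+1) → V := fun i => ((e.symm i : ↥T.toFinset) : V) with hu
    have huinj : Function.Injective u := fun i j h =>
      e.symm.injective (Subtype.ext h)
    have huT : ∀ i, u i ∈ T := fun i => Set.mem_toFinset.mp (e.symm i).2
    have huS : ∀ i, u i ∈ S := fun i => (hTsub (huT i)).1
    have hunadj : ∀ i, ¬ G.Adj x (u i) := fun i => (hTsub (huT i)).2
    have hune : ∀ i, u i ≠ w := fun i h => hunadj i (by rw [h]; exact hxw)
    have hunx : ∀ i, u i ≠ x := fun i h => hxS (by rw [← h]; exact huS i)
    have hSS : ∀ p q : V, p ∈ S → q ∈ S → ¬ G.Adj p q :=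
      fun p q hp hq h => hS hp hq (G.ne_of_adj h) h
    have hwu : ∀ i, ¬ G.Adj w (u i) := fun i => hSS _ _ hwS (huS i)
    have hux : ∀ i, ¬ G.Adj (u i) x := fun i h => hunadj i h.symm
    have huw : ∀ i, ¬ G.Adj (u i) w := fun i => hSS _ _ (huS i) hwS
    have hxwne : x ≠ w := G.ne_of_adj hxw
    -- build an induced P2 + (l+1) P1
    refine not_inducedFree_of_map (P2lP1 (l+1)) (vmap x w u) ?_ ?_ hfree
    · rintro ⟨a, ha⟩ ⟨b, hb⟩ hab
      rcases a with _ | _ | a <;> rcases b with _ | _ | b <;>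
        simp only [vmap] at hab <;>
      first
        | rfl
        | exact absurd hab hxwne
        | exact absurd hab.symm hxwne
        | exact absurd hab.symm (hunx _)
        | exact absurd hab.symm (hune _)
        | exact absurd hab (hunx _)
        | exact absurd hab (hune _)
        | (have h2 := huinj hab
           simp only [Fin.mk.injEq] at h2
           exact Fin.ext (by simp only [Fin.val_mk]; omega))
    · rintro ⟨a, ha⟩ ⟨b, hb⟩
      rw [P2lP1_adj]
      have h0eq : (0 : Fin (l+1+2)) = ⟨0, by omega⟩ := by ext; simp
      have h1eq : (1 : Fin (l+1+2)) = ⟨1, by omega⟩ := by ext; simp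
      rcases a with _ | _ | a <;> rcases b with _ | _ | b <;>
        simp only [vmap, h0eq, h1eq, Fin.mk.injEq] <;>
      first
        | exact iff_of_true hxw (by first | simp | omega)
        | exact iff_of_true hxw.symm (by first | simp | omega)
        | exact iff_of_false (G.irrefl) (by first | simp | omega)
        | exact iff_of_false (hunadj _) (by first | simp | omega)
        | exact iff_of_false (hwu _) (by first | simp | omega)
        | exact iff_of_false (hux _) (by first | simp | omega)
        | exact iff_of_false (huw _) (by first | simp | omega)
        | exact iff_of_false (hSS _ _ (huS _) (huS _)) (by first | simp | omega)
  by_cases hB : ∃ s ∈ S, ∀ x ∈ W, G.Adj x s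
  · -- some vertex of S dominates W : contradiction with criticality
    exfalso
    obtain ⟨s, hsS, hsadj⟩ := hB
    have hUnc : ¬ (G.induce (insert s W)).Colorable (m+1) := by
      rintro ⟨C⟩
      apply hWnc
      set c0 := C ⟨s, Set.mem_insert s W⟩ with hc0
      have C' : (G.induce W).Coloring {a : Fin (m+1) // a ≠ c0} := by
        refine Coloring.mk (fun w => ⟨C ⟨w.1, Set.mem_insert_of_mem s w.2⟩, ?_⟩) ?_
        · exact C.valid (show (G.induce (insert s W)).Adj
            ⟨w.1, Set.mem_insert_of_mem s w.2⟩ ⟨s, Set.mem_insert s W⟩ from hsadj w.1 w.2)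
        · intro a b hab h
          exact C.valid (show (G.induce (insert s W)).Adj
            ⟨a.1, Set.mem_insert_of_mem s a.2⟩ ⟨b.1, Set.mem_insert_of_mem s b.2⟩ from hab)
            (congrArg Subtype.val h)
      have hcc := C'.colorable
      have hcardsub : Fintype.card {a : Fin (m+1) // a ≠ c0} = m := by
        rw [Fintype.card_subtype_compl, Fintype.card_subtype_eq, Fintype.card_fin]
        omega
      rwa [hcardsub] at hcc
    obtain ⟨t, htS, hts⟩ := Set.exists_ne_of_one_lt_ncard (show 1 < S.ncard by omega) s
    have hsub : insert s W ⊆ ({t}ᶜ : Set V) := by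
      rintro a (rfl | haW)
      · exact fun h => hts (Set.mem_singleton_iff.mp h).symm
      · exact fun h => (hWsub haW) ((Set.mem_singleton_iff.mp h) ▸ htS)
    have hdel := hcrit.2 t
    have hcol : (G.induce ({t}ᶜ : Set V)).Colorable (m+1) := by
      apply chromaticNumber_le_iff_colorable.mp
      exact_mod_cast enat_le_of_lt_succ (by exact_mod_cast hdel)
    exact hUnc (induce_colorable_mono hsub hcol)
  · -- otherwise S is covered by the non-neighborhoods of vertices of W
    push_neg at hB
    have hcover : S.toFinset ⊆ W.toFinset.biUnion
        (fun x => {a : V | a ∈ S ∧ ¬ G.Adj x a}.toFinset) := by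
      intro a haf
      rw [Set.mem_toFinset] at haf
      obtain ⟨x, hxW, hxa⟩ := hB a haf
      rw [Finset.mem_biUnion]
      exact ⟨x, Set.mem_toFinset.mpr hxW, Set.mem_toFinset.mpr ⟨haf, hxa⟩⟩
    calc S.ncard = S.toFinset.card := Set.ncard_eq_toFinset_card' S
      _ ≤ _ := Finset.card_le_card hcover
      _ ≤ ∑ x ∈ W.toFinset, {a : V | a ∈ S ∧ ¬ G.Adj x a}.toFinset.card :=
          Finset.card_biUnion_le
      _ ≤ ∑ _x ∈ W.toFinset, l := Finset.sum_le_sum (fun x hx => by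
            rw [← Set.ncard_eq_toFinset_card']
            exact claimA x (hWsub (Set.mem_toFinset.mp hx)))
      _ = W.toFinset.card * l := by rw [Finset.sum_const, smul_eq_mul]
      _ = W.ncard * l := by rw [← Set.ncard_eq_toFinset_card']
      _ ≤ f * l := Nat.mul_le_mul_right l hWf
      _ = l * f := Nat.mul_comm f l
end
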